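/- arXiv:2603.02155 — 3 statements merged into one kernel-verified Lean document; each statement's English description precedes it below -/
import Mathlib

section
/- Let $\eta > 0$, $\mathcal{A}$ a finite set, $\pi^{\mathsf{ref}} \in \Delta(\mathcal{A})$ with full support, and let $\hat{r}, r : \mathcal{A} \to \mathbb{R}$ satisfy $\hat{r}(a) \geq r(a)$ for all $a$. Let $\hat{\pi}(a) \propto \pi^{\mathsf{ref}}(a)e^{\eta \hat{r}(a)}$ and $\pi^*(a) \propto \pi^{\mathsf{ref}}(a)e^{\eta r(a)}$. Then $J(\pi^*) - J(\hat{\pi}) \leq \eta \sum_a \hat{\pi}(a)(\hat{r}(a) - r(a))^2$, where $J(\pi)=\sum_a \pi(a)(r(a)-\eta^{-1}\log(\pi(a)/\pi^{\mathsf{ref}}(a)))$. -/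
lemma exp_neg_le_quad (x : ℝ) (hx : 0 ≤ x) : Real.exp (-x) ≤ 1 - x + x ^ 2 := by
  have h1 : (1 : ℝ) + x ≤ Real.exp x := by linarith [Real.add_one_le_exp x]
  have h1p : (0 : ℝ) < 1 + x := by linarith
  have h2 : Real.exp (-x) = (Real.exp x)⁻¹ := Real.exp_neg x
  have h3 : (Real.exp x)⁻¹ ≤ (1 + x)⁻¹ := by
    apply inv_anti₀ h1p h1
  have h4 : (1 + x)⁻¹ ≤ 1 - x + x ^ 2 := by
    rw [inv_le_iff_one_le_mul₀ h1p]
    nlinarith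
  linarith [h2 ▸ h3.trans h4]

open Finset in
/-- KL-regularized regret decomposition under optimism: if `r̂ ≥ r` pointwise,
then `J(π*) - J(π̂) ≤ η ∑ a, π̂(a) (r̂(a) - r(a))²`. -/
theorem stmt_2 {A : Type*} [Fintype A] [Nonempty A]
    (η : ℝ) (hη : 0 < η) (r rhat : A → ℝ) (πref : A → ℝ)
    (href_pos : ∀ a, 0 < πref a) (href_sum : ∑ a, πref a = 1)
    (hopt : ∀ a, r a ≤ rhat a)
    (J : (A → ℝ) → ℝ)
    (hJ : ∀ π, J π = ∑ a, π a * (r a - η⁻¹ * Real.log (π a / πref a)))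
    (πstar πhat : A → ℝ)
    (hstar : ∀ a, πstar a = πref a * Real.exp (η * r a)
        / ∑ b, πref b * Real.exp (η * r b))
    (hhat : ∀ a, πhat a = πref a * Real.exp (η * rhat a)
        / ∑ b, πref b * Real.exp (η * rhat b)) :
    J πstar - J πhat ≤ η * ∑ a, πhat a * (rhat a - r a) ^ 2 := by
  have hη' : η ≠ 0 := hη.ne'
  set Zr := ∑ b, πref b * Real.exp (η * r b) with hZr
  set Zh := ∑ b, πref b * Real.exp (η * rhat b) with hZh
  have hZrpos : 0 < Zr :=
    Finset.sum_pos (fun b _ => mul_pos (href_pos b) (Real.exp_pos _)) Finset.univ_nonempty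
  have hZhpos : 0 < Zh :=
    Finset.sum_pos (fun b _ => mul_pos (href_pos b) (Real.exp_pos _)) Finset.univ_nonempty
  have hsumstar : ∑ a, πstar a = 1 := by
    have h : ∑ a, πstar a = ∑ a, πref a * Real.exp (η * r a) / Zr :=
      Finset.sum_congr rfl fun a _ => hstar a
    rw [h, ← Finset.sum_div, ← hZr, div_self hZrpos.ne']
  have hsumhat : ∑ a, πhat a = 1 := by
    have h : ∑ a, πhat a = ∑ a, πref a * Real.exp (η * rhat a) / Zh :=
      Finset.sum_congr rfl fun a _ => hhat a
    rw [h, ← Finset.sum_div, ← hZh, div_self hZhpos.ne']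
  have hlogstar : ∀ a, Real.log (πstar a / πref a) = η * r a - Real.log Zr := by
    intro a
    have h : πstar a / πref a = Real.exp (η * r a) / Zr := by
      rw [hstar a]
      have h1 := (href_pos a).ne'
      have h2 := hZrpos.ne'
      field_simp
    rw [h, Real.log_div (Real.exp_ne_zero _) hZrpos.ne', Real.log_exp]
  have hloghat : ∀ a, Real.log (πhat a / πref a) = η * rhat a - Real.log Zh := by
    intro a
    have h : πhat a / πref a = Real.exp (η * rhat a) / Zh := by
      rw [hhat a]
      have h1 := (href_pos a).ne'
      have h2 := hZhpos.ne'
      field_simp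
    rw [h, Real.log_div (Real.exp_ne_zero _) hZhpos.ne', Real.log_exp]
  have hJstar : J πstar = η⁻¹ * Real.log Zr := by
    rw [hJ]
    have : ∀ a ∈ Finset.univ, πstar a * (r a - η⁻¹ * Real.log (πstar a / πref a))
        = πstar a * (η⁻¹ * Real.log Zr) := by
      intro a _
      have h : r a - η⁻¹ * (η * r a - Real.log Zr) = η⁻¹ * Real.log Zr := by
        field_simp; ring
      rw [hlogstar a, h]
    rw [Finset.sum_congr rfl this, ← Finset.sum_mul, hsumstar, one_mul]
  have hJhat : J πhat = (∑ a, πhat a * (r a - rhat a)) + η⁻¹ * Real.log Zh := by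
    rw [hJ]
    have : ∀ a ∈ Finset.univ, πhat a * (r a - η⁻¹ * Real.log (πhat a / πref a))
        = πhat a * (r a - rhat a) + πhat a * (η⁻¹ * Real.log Zh) := by
      intro a _
      have h : r a - η⁻¹ * (η * rhat a - Real.log Zh)
          = (r a - rhat a) + η⁻¹ * Real.log Zh := by
        field_simp; ring
      rw [hloghat a, h]; ring
    rw [Finset.sum_congr rfl this, Finset.sum_add_distrib, ← Finset.sum_mul, hsumhat, one_mul]
  -- S = E_{πhat} exp(-η Δ) = Zr / Zh
  set S := ∑ a, πhat a * Real.exp (-(η * (rhat a - r a))) with hS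
  have hhatpos : ∀ a, 0 < πhat a := fun a => by
    rw [hhat a]; exact div_pos (mul_pos (href_pos a) (Real.exp_pos _)) hZhpos
  have hSeq : Zh * S = Zr := by
    rw [hS, Finset.mul_sum]
    apply Finset.sum_congr rfl
    intro a _
    have key : Real.exp (η * rhat a) * Real.exp (-(η * (rhat a - r a)))
        = Real.exp (η * r a) := by
      rw [← Real.exp_add]; congr 1; ring
    rw [hhat a]
    field_simp
    rw [mul_assoc, key]
  have hSpos : 0 < S :=
    Finset.sum_pos (fun a _ => mul_pos (hhatpos a) (Real.exp_pos _)) Finset.univ_nonempty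
  have hlogS : Real.log Zr - Real.log Zh = Real.log S := by
    rw [← hSeq, Real.log_mul hZhpos.ne' hSpos.ne']; ring
  set T1 := ∑ a, πhat a * (rhat a - r a) with hT1
  set T2 := ∑ a, πhat a * (rhat a - r a) ^ 2 with hT2
  have hSbound : S ≤ 1 - η * T1 + η ^ 2 * T2 := by
    have step : S ≤ ∑ a, πhat a * (1 - η * (rhat a - r a) + (η * (rhat a - r a)) ^ 2) := by
      apply Finset.sum_le_sum
      intro a _
      exact mul_le_mul_of_nonneg_left
        (exp_neg_le_quad _ (mul_nonneg hη.le (sub_nonneg.2 (hopt a)))) (hhatpos a).le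
    have expand : ∑ a, πhat a * (1 - η * (rhat a - r a) + (η * (rhat a - r a)) ^ 2)
        = (∑ a, πhat a) - η * T1 + η ^ 2 * T2 := by
      rw [hT1, hT2, Finset.mul_sum, Finset.mul_sum, ← Finset.sum_sub_distrib,
        ← Finset.sum_add_distrib]
      apply Finset.sum_congr rfl
      intro a _
      ring
    rw [expand, hsumhat] at step
    exact step
  have hlogSle : Real.log S ≤ S - 1 := Real.log_le_sub_one_of_pos hSpos
  have hmain : J πstar - J πhat = η⁻¹ * Real.log S + T1 := by
    rw [hJstar, hJhat, ← hlogS, hT1]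
    have : ∑ a, πhat a * (rhat a - r a) = -∑ a, πhat a * (r a - rhat a) := by
      rw [← Finset.sum_neg_distrib]
      apply Finset.sum_congr rfl
      intro a _; ring
    rw [this]; ring
  rw [hmain]
  have h1 : η⁻¹ * Real.log S ≤ η⁻¹ * (S - 1) :=
    mul_le_mul_of_nonneg_left hlogSle (inv_nonneg.2 hη.le)
  have h2 : η⁻¹ * (S - 1) ≤ η⁻¹ * (- η * T1 + η ^ 2 * T2) := by
    apply mul_le_mul_of_nonneg_left _ (inv_nonneg.2 hη.le)
    linarith
  have h3 : η⁻¹ * (- η * T1 + η ^ 2 * T2) = -T1 + η * T2 := by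
    field_simp
  linarith
end

section
/- Let $K \geq 9$, $\eta > 0$, $\delta > 0$ with $\eta\delta \geq 2\log K$. On a $K$-armed bandit with uniform reference policy, define $r_1(1)=\delta$, $r_1(i)=0$ for $i\geq 2$, and $r_2(2)=2\delta$, $r_2(i)=r_1(i)$ otherwise. Then for the policy $\hat\pi(a)\propto\sqrt{\pi_1^*(a)\pi_2^*(a)}$ (which minimizes the sum of gaps), $\mathrm{SubOpt}_{r_1}(\hat\pi) + \mathrm{SubOpt}_{r_2}(\hat\pi) \geq \delta/2$, where $\mathrm{SubOpt}_{r_i}(\pi) = J_{r_i}(\pi_i^*) - J_{r_i}(\pi)$ and $\pi_i^*$ is the optimal KL-regularized policy for $r_i$. -/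
lemma sum3_aux (K : ℕ) (hK : 2 ≤ K) (x y c : ℝ) :
    ∑ a : Fin K, (if a.val = 0 then x else if a.val = 1 then y else c)
      = x + y + ((K : ℝ) - 2) * c := by
  have h0 : (0 : ℕ) < K := by omega
  have h1 : (1 : ℕ) < K := by omega
  have key : ∀ a : Fin K,
      (if a.val = 0 then x else if a.val = 1 then y else c)
        = (if a = ⟨0, h0⟩ then x - c else 0) + (if a = ⟨1, h1⟩ then y - c else 0) + c := by
    intro a
    rcases eq_or_ne a.val 0 with h | h
    · have ha : a = ⟨0, h0⟩ := Fin.ext h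
      have ha' : a ≠ ⟨1, h1⟩ := by intro hh; rw [hh] at h; simp at h
      simp [h, ha, ha']
    · rcases eq_or_ne a.val 1 with h' | h'
      · have ha : a = ⟨1, h1⟩ := Fin.ext h'
        have ha' : a ≠ ⟨0, h0⟩ := by intro hh; rw [hh] at h; simp at h
        simp [h, h', ha, ha']
      · have ha : a ≠ ⟨0, h0⟩ := by intro hh; rw [hh] at h; simp at h
        have ha' : a ≠ ⟨1, h1⟩ := by intro hh; rw [hh] at h'; simp at h'
        simp [h, h', ha, ha']
  rw [Finset.sum_congr rfl fun a _ => key a]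
  rw [Finset.sum_add_distrib, Finset.sum_add_distrib,
    Finset.sum_ite_eq' Finset.univ, Finset.sum_ite_eq' Finset.univ]
  simp
  ring

set_option maxHeartbeats 1000000 in
open Finset in
/-- On the two hard instances of the low-regularization lower bound
(`K`-armed bandit, uniform reference policy, `r₁(1)=δ`, `r₂(2)=2δ`), the
geometric-mean policy `π̂(a) ∝ √(π₁*(a)π₂*(a))` satisfies
`SubOpt₁(π̂) + SubOpt₂(π̂) ≥ δ/2` whenever `ηδ ≥ 2 log K` and `K ≥ 9`. -/
theorem stmt_16 (K : ℕ) (hK : 9 ≤ K) (η δ : ℝ) (hη : 0 < η) (hδ : 0 < δ)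
    (hsep : 2 * Real.log K ≤ η * δ)
    (πref : Fin K → ℝ) (href : ∀ a, πref a = 1 / K)
    (r₁ r₂ : Fin K → ℝ)
    (hr₁ : ∀ i, r₁ i = if i.val = 0 then δ else 0)
    (hr₂ : ∀ i, r₂ i = if i.val = 1 then 2 * δ else r₁ i)
    (J : (Fin K → ℝ) → (Fin K → ℝ) → ℝ)
    (hJ : ∀ r π, J r π = ∑ a, π a * (r a - η⁻¹ * Real.log (π a / πref a)))
    (π₁ π₂ πhat : Fin K → ℝ)
    (h₁ : ∀ a, π₁ a = πref a * Real.exp (η * r₁ a)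
        / ∑ b, πref b * Real.exp (η * r₁ b))
    (h₂ : ∀ a, π₂ a = πref a * Real.exp (η * r₂ a)
        / ∑ b, πref b * Real.exp (η * r₂ b))
    (hhat : ∀ a, πhat a = Real.sqrt (π₁ a * π₂ a)
        / ∑ b, Real.sqrt (π₁ b * π₂ b)) :
    (J r₁ π₁ - J r₁ πhat) + (J r₂ π₂ - J r₂ πhat) ≥ δ / 2 := by
  have hK2 : 2 ≤ K := by omega
  set Kr : ℝ := (K : ℝ) with hKr
  have hKr9 : (9 : ℝ) ≤ Kr := by rw [hKr]; exact_mod_cast hK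
  have hKr0 : 0 < Kr := by linarith
  set E : ℝ := Real.exp (η * δ) with hE
  have hE0 : 0 < E := Real.exp_pos _
  -- E ≥ Kr^2
  have hEK : Kr ^ 2 ≤ E := by
    have h1 : Real.exp (2 * Real.log Kr) ≤ Real.exp (η * δ) := Real.exp_le_exp.mpr hsep
    have h2 : Real.exp (2 * Real.log Kr) = Kr ^ 2 := by
      rw [two_mul, Real.exp_add, Real.exp_log hKr0]; ring
    rw [h2] at h1; exact h1
  have hE81 : (81 : ℝ) ≤ E := by nlinarith
  set E2 : ℝ := Real.exp (η * (2 * δ)) with hE2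
  have hE20 : 0 < E2 := Real.exp_pos _
  have hE2sq : E2 = E ^ 2 := by
    rw [hE2, hE, sq, ← Real.exp_add]; congr 1; ring
  set Z₁ : ℝ := E + Kr - 1 with hZ₁
  set Z₂ : ℝ := E2 + E + Kr - 2 with hZ₂
  set T : ℝ := 2 * E + Kr - 2 with hT
  have hZ₁0 : 0 < Z₁ := by rw [hZ₁]; linarith
  have hZ₂0 : 0 < Z₂ := by rw [hZ₂]; nlinarith
  have hT0 : 0 < T := by rw [hT]; linarith
  -- partition function sums
  have hs1 : ∑ b, πref b * Real.exp (η * r₁ b) = Z₁ / Kr := by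
    have hpt : ∀ b : Fin K, πref b * Real.exp (η * r₁ b)
        = (if b.val = 0 then E / Kr else if b.val = 1 then 1 / Kr else 1 / Kr) := by
      intro b
      rw [href, hr₁]
      split_ifs with h h' <;> simp [hE, hKr] <;> ring
    rw [Finset.sum_congr rfl fun b _ => hpt b, sum3_aux K hK2]
    rw [hZ₁]; field_simp; ring
  have hs2 : ∑ b, πref b * Real.exp (η * r₂ b) = Z₂ / Kr := by
    have hpt : ∀ b : Fin K, πref b * Real.exp (η * r₂ b)
        = (if b.val = 0 then E / Kr else if b.val = 1 then E2 / Kr else 1 / Kr) := by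
      intro b
      rw [href, hr₂, hr₁]
      split_ifs with h h' h'' <;> first
        | omega
        | (simp [hE, hE2, hKr] <;> ring)
    rw [Finset.sum_congr rfl fun b _ => hpt b, sum3_aux K hK2]
    rw [hZ₂]; field_simp; ring
  have hdiv : ∀ (x Z : ℝ), Z ≠ 0 → 1 / Kr * x / (Z / Kr) = x / Z := by
    intro x Z hZ; field_simp
  -- closed forms for the policies
  have hπ₁' : ∀ a : Fin K, π₁ a = (if a.val = 0 then E else if a.val = 1 then 1 else 1) / Z₁ := by
    intro a
    rw [h₁, hs1, href, hr₁]
    split_ifs with h h' <;> (try simp only [mul_zero, Real.exp_zero]) <;>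
      rw [hdiv _ _ hZ₁0.ne']
  have hπ₂' : ∀ a : Fin K,
      π₂ a = (if a.val = 0 then E else if a.val = 1 then E2 else 1) / Z₂ := by
    intro a
    rw [h₂, hs2, href, hr₂, hr₁]
    split_ifs with h h' h'' <;> first
      | omega
      | ((try simp only [mul_zero, Real.exp_zero]); rw [hdiv _ _ hZ₂0.ne'])
  have hinv : η⁻¹ * η = 1 := inv_mul_cancel₀ hη.ne'
  -- sqrt closed form
  have hP : (0:ℝ) < Z₁ * Z₂ := mul_pos hZ₁0 hZ₂0
  set S : ℝ := Real.sqrt (Z₁ * Z₂) with hS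
  have hS0 : 0 < S := Real.sqrt_pos.mpr hP
  have hkey : ∀ x : ℝ, 0 ≤ x → Real.sqrt (x ^ 2 / (Z₁ * Z₂)) = x / S := by
    intro x hx
    rw [hS, Real.sqrt_div (by positivity), Real.sqrt_sq hx]
  have hsq : ∀ a : Fin K, Real.sqrt (π₁ a * π₂ a)
      = (if a.val = 0 then E / S else if a.val = 1 then E / S else 1 / S) := by
    intro a
    rw [hπ₁', hπ₂']
    split_ifs with h h'
    · rw [show E / Z₁ * (E / Z₂) = E ^ 2 / (Z₁ * Z₂) by rw [div_mul_div_comm, sq]]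
      exact hkey E hE0.le
    · rw [show 1 / Z₁ * (E2 / Z₂) = E ^ 2 / (Z₁ * Z₂) by
        rw [div_mul_div_comm, one_mul, hE2sq]]
      exact hkey E hE0.le
    · rw [show 1 / Z₁ * (1 / Z₂) = 1 ^ 2 / (Z₁ * Z₂) by
        rw [div_mul_div_comm, one_mul, one_pow]]
      exact hkey 1 zero_le_one
  have hDS : S * S⁻¹ = 1 := mul_inv_cancel₀ hS0.ne'
  have hssum : ∑ b, Real.sqrt (π₁ b * π₂ b) = T / S := by
    rw [Finset.sum_congr rfl fun b _ => hsq b, sum3_aux K hK2, ← hKr, hT]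
    ring
  have hdiv2 : ∀ x : ℝ, (x / S) / (T / S) = x / T := by
    intro x
    rw [div_div_div_comm, div_self hS0.ne', div_one]
  have hπh : ∀ a : Fin K,
      πhat a = (if a.val = 0 then E / T else if a.val = 1 then E / T else 1 / T) := by
    intro a
    rw [hhat, hssum, hsq]
    split_ifs <;> rw [hdiv2]
  -- log computations
  have hlogE : Real.log E = η * δ := by rw [hE]; exact Real.log_exp _
  have hlogE2 : Real.log E2 = η * (2 * δ) := by rw [hE2]; exact Real.log_exp _
  have hlog : ∀ w Z : ℝ, 0 < w → 0 < Z →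
      Real.log ((w / Z) / (1 / Kr)) = Real.log w + Real.log Kr - Real.log Z := by
    intro w Z hw hZ
    have harg : (w / Z) / (1 / Kr) = w * Kr / Z := by
      field_simp
    rw [harg, Real.log_div (by positivity) hZ.ne', Real.log_mul hw.ne' hKr0.ne']
  -- the four J values
  have hJ1 : J r₁ π₁ = η⁻¹ * (Real.log Z₁ - Real.log Kr) := by
    rw [hJ]
    have hpt : ∀ a : Fin K, π₁ a * (r₁ a - η⁻¹ * Real.log (π₁ a / πref a))
        = if a.val = 0 then E / Z₁ * (η⁻¹ * (Real.log Z₁ - Real.log Kr))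
          else if a.val = 1 then 1 / Z₁ * (η⁻¹ * (Real.log Z₁ - Real.log Kr))
          else 1 / Z₁ * (η⁻¹ * (Real.log Z₁ - Real.log Kr)) := by
      intro a
      rw [hπ₁', hr₁, href]
      split_ifs with h h'
      · rw [hlog E Z₁ hE0 hZ₁0, hlogE]
        linear_combination (-(E / Z₁ * δ)) * hinv
      · rw [hlog 1 Z₁ one_pos hZ₁0, Real.log_one]
        ring
      · rw [hlog 1 Z₁ one_pos hZ₁0, Real.log_one]
        ring
    rw [Finset.sum_congr rfl fun a _ => hpt a, sum3_aux K hK2, ← hKr]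
    have hD : Z₁ * Z₁⁻¹ = 1 := mul_inv_cancel₀ hZ₁0.ne'
    linear_combination (η⁻¹ * (Real.log Z₁ - Real.log Kr)) * hD +
      (η⁻¹ * (Real.log Z₁ - Real.log Kr)) * Z₁⁻¹ * hZ₁
  have hJ2 : J r₂ π₂ = η⁻¹ * (Real.log Z₂ - Real.log Kr) := by
    rw [hJ]
    have hpt : ∀ a : Fin K, π₂ a * (r₂ a - η⁻¹ * Real.log (π₂ a / πref a))
        = if a.val = 0 then E / Z₂ * (η⁻¹ * (Real.log Z₂ - Real.log Kr))
          else if a.val = 1 then E2 / Z₂ * (η⁻¹ * (Real.log Z₂ - Real.log Kr))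
          else 1 / Z₂ * (η⁻¹ * (Real.log Z₂ - Real.log Kr)) := by
      intro a
      rw [hπ₂', hr₂, hr₁, href]
      split_ifs with h h' h'' <;> first
        | omega
        | (rw [hlog E2 Z₂ hE20 hZ₂0, hlogE2]
           linear_combination (-(E2 / Z₂ * (2 * δ))) * hinv)
        | (rw [hlog E Z₂ hE0 hZ₂0, hlogE]
           linear_combination (-(E / Z₂ * δ)) * hinv)
        | (rw [hlog 1 Z₂ one_pos hZ₂0, Real.log_one]
           ring)
    rw [Finset.sum_congr rfl fun a _ => hpt a, sum3_aux K hK2, ← hKr]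
    have hD : Z₂ * Z₂⁻¹ = 1 := mul_inv_cancel₀ hZ₂0.ne'
    linear_combination (η⁻¹ * (Real.log Z₂ - Real.log Kr)) * hD +
      (η⁻¹ * (Real.log Z₂ - Real.log Kr)) * Z₂⁻¹ * hZ₂
  have hJ1h : J r₁ πhat = η⁻¹ * (Real.log T - Real.log Kr) - δ * E / T := by
    rw [hJ]
    have hpt : ∀ a : Fin K, πhat a * (r₁ a - η⁻¹ * Real.log (πhat a / πref a))
        = if a.val = 0 then E / T * (η⁻¹ * (Real.log T - Real.log Kr))
          else if a.val = 1 then E / T * (η⁻¹ * (Real.log T - Real.log Kr) - δ)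
          else 1 / T * (η⁻¹ * (Real.log T - Real.log Kr)) := by
      intro a
      rw [hπh, hr₁, href]
      split_ifs with h h'
      · rw [hlog E T hE0 hT0, hlogE]
        linear_combination (-(E / T * δ)) * hinv
      · rw [hlog E T hE0 hT0, hlogE]
        linear_combination (-(E / T * δ)) * hinv
      · rw [hlog 1 T one_pos hT0, Real.log_one]
        ring
    rw [Finset.sum_congr rfl fun a _ => hpt a, sum3_aux K hK2, ← hKr]
    have hD : T * T⁻¹ = 1 := mul_inv_cancel₀ hT0.ne'
    linear_combination (η⁻¹ * (Real.log T - Real.log Kr)) * hD +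
      (η⁻¹ * (Real.log T - Real.log Kr)) * T⁻¹ * hT
  have hJ2h : J r₂ πhat = η⁻¹ * (Real.log T - Real.log Kr) + δ * E / T := by
    rw [hJ]
    have hpt : ∀ a : Fin K, πhat a * (r₂ a - η⁻¹ * Real.log (πhat a / πref a))
        = if a.val = 0 then E / T * (η⁻¹ * (Real.log T - Real.log Kr))
          else if a.val = 1 then E / T * (η⁻¹ * (Real.log T - Real.log Kr) + δ)
          else 1 / T * (η⁻¹ * (Real.log T - Real.log Kr)) := by
      intro a
      rw [hπh, hr₂, hr₁, href]
      split_ifs with h h' h'' <;> first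
        | omega
        | (rw [hlog E T hE0 hT0, hlogE]
           linear_combination (-(E / T * δ)) * hinv)
        | (rw [hlog 1 T one_pos hT0, Real.log_one]
           ring)
    rw [Finset.sum_congr rfl fun a _ => hpt a, sum3_aux K hK2, ← hKr]
    have hD : T * T⁻¹ = 1 := mul_inv_cancel₀ hT0.ne'
    linear_combination (η⁻¹ * (Real.log T - Real.log Kr)) * hD +
      (η⁻¹ * (Real.log T - Real.log Kr)) * T⁻¹ * hT
  -- final inequality
  rw [hJ1, hJ2, hJ1h, hJ2h]
  have l1 : η * δ ≤ Real.log Z₁ := by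
    rw [Real.le_log_iff_exp_le hZ₁0, ← hE, hZ₁]; linarith
  have l2 : 2 * (η * δ) ≤ Real.log Z₂ := by
    rw [Real.le_log_iff_exp_le hZ₂0]
    have he : Real.exp (2 * (η * δ)) = E2 := by rw [hE2]; congr 1; ring
    rw [he, hZ₂]; linarith
  have l3 : Real.log T ≤ Real.log 3 + η * δ := by
    have hKE : Kr ≤ E := le_trans (by nlinarith [hKr9] : Kr ≤ Kr ^ 2) hEK
    have hT3 : T ≤ 3 * E := by rw [hT]; linarith
    have hlt : Real.log T ≤ Real.log (3 * E) := by
      apply Real.log_le_log hT0 hT3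
    rwa [Real.log_mul (by norm_num) hE0.ne', hlogE] at hlt
  have l4 : 4 * Real.log 3 ≤ η * δ := by
    have h9 : Real.log 9 ≤ Real.log Kr := Real.log_le_log (by norm_num) hKr9
    have h9' : Real.log (9:ℝ) = 2 * Real.log 3 := by
      rw [show (9:ℝ) = 3 ^ 2 by norm_num, Real.log_pow]; push_cast; ring
    linarith
  have key : η * δ / 2 ≤ Real.log Z₁ + Real.log Z₂ - 2 * Real.log T := by linarith
  have hmul : η⁻¹ * (η * δ / 2) ≤ η⁻¹ * (Real.log Z₁ + Real.log Z₂ - 2 * Real.log T) :=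
    mul_le_mul_of_nonneg_left key (by positivity)
  have heq : η⁻¹ * (η * δ / 2) = δ / 2 := by
    linear_combination (δ / 2) * hinv
  rw [ge_iff_le,
    show η⁻¹ * (Real.log Z₁ - Real.log Kr) -
        (η⁻¹ * (Real.log T - Real.log Kr) - δ * E / T) +
        (η⁻¹ * (Real.log Z₂ - Real.log Kr) -
          (η⁻¹ * (Real.log T - Real.log Kr) + δ * E / T))
      = η⁻¹ * (Real.log Z₁ + Real.log Z₂ - 2 * Real.log T) from by ring]
  linarith
end

section
/- Let $K, m \geq 1$, $\eta > 0$, $\delta > 0$, $\alpha \geq 2\delta$, and let $M$ be a real number with $K e^{\eta\alpha} \leq M \leq 2K e^{\eta\alpha}$, and let $x_1,\dots,x_m \in [-\alpha+\delta, \alpha-\delta]$. Then $\log\Big(1 + \frac{2M}{(\sum_{j=1}^m e^{\eta x_j} + M)^2}\sum_{j=1}^m e^{\eta x_j}\big(\cosh(\eta\delta) - 1\big)\Big) \geq \log\Big(1 + \frac{m\,\eta^2\delta^2}{5K e^{2\eta\alpha}}\Big) \geq \frac{m\,\eta\,\delta^2}{10 K e^{2\eta\alpha}}\cdot\eta$.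 -/
open Finset

private lemma half_sq_le_cosh_sub_one {t : ℝ} (ht : 0 ≤ t) :
    t ^ 2 / 2 ≤ Real.cosh t - 1 := by
  have h1 : Real.cosh t = 2 * Real.sinh (t / 2) ^ 2 + 1 := by
    have h := Real.cosh_two_mul (t / 2)
    have h2 := Real.cosh_sq (t / 2)
    rw [show 2 * (t / 2) = t by ring] at h
    linarith
  have hs : t / 2 ≤ Real.sinh (t / 2) := Real.self_le_sinh_iff.2 (by linarith)
  nlinarith

private lemma log_one_add_ge_half {x : ℝ} (h0 : 0 ≤ x) (h1 : x ≤ 1) :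
    x / 2 ≤ Real.log (1 + x) := by
  rw [Real.le_log_iff_exp_le (by linarith)]
  have h2 : Real.exp (x / 2) * Real.exp (-(x / 2)) = 1 := by
    rw [← Real.exp_add]; simp
  have h3 : 1 - x / 2 ≤ Real.exp (-(x / 2)) := by
    have := Real.add_one_le_exp (-(x / 2)); linarith
  have h5 : 0 < Real.exp (x / 2) := Real.exp_pos _
  nlinarith

set_option maxHeartbeats 1000000 in
open Finset in
/-- Key quantitative step of the high-regularization lower bound. -/
theorem stmt_17 (K m : ℕ) (hK : 1 ≤ K) (hm : 1 ≤ m) (hmK : m ≤ K)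
    (η δ α M : ℝ) (hη : 0 < η) (hδ : 0 < δ) (hα : 2 * δ ≤ α)
    (hM₁ : K * Real.exp (η * α) ≤ M) (hM₂ : M ≤ 2 * K * Real.exp (η * α))
    (x : Fin m → ℝ) (hx : ∀ j, x j ∈ Set.Icc (-α + δ) (α - δ)) :
    Real.log (1 + 2 * M / (∑ j, Real.exp (η * x j) + M) ^ 2
          * ∑ j, Real.exp (η * x j) * (Real.cosh (η * δ) - 1))
        ≥ Real.log (1 + m * η ^ 2 * δ ^ 2 / (5 * K * Real.exp (2 * η * α))) ∧
      Real.log (1 + m * η ^ 2 * δ ^ 2 / (5 * K * Real.exp (2 * η * α)))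
        ≥ m * η * δ ^ 2 / (10 * K * Real.exp (2 * η * α)) * η := by
  have hK1 : (1 : ℝ) ≤ K := by exact_mod_cast hK
  have hm1 : (1 : ℝ) ≤ m := by exact_mod_cast hm
  have hmK' : (m : ℝ) ≤ K := by exact_mod_cast hmK
  set E : ℝ := Real.exp (η * α) with hE
  have hEpos : 0 < E := Real.exp_pos _
  have hE1 : 1 ≤ E := Real.one_le_exp (by nlinarith)
  have hE2 : Real.exp (2 * η * α) = E ^ 2 := by
    rw [hE, ← Real.exp_nat_mul]; ring_nf
  set c : ℝ := K * E with hc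
  have hcpos : 0 < c := by positivity
  set S : ℝ := ∑ j, Real.exp (η * x j) with hS
  have hCt : (η * δ) ^ 2 / 2 ≤ Real.cosh (η * δ) - 1 :=
    half_sq_le_cosh_sub_one (by positivity)
  -- lower bound on S
  have hSlow : (m : ℝ) * Real.exp (-(η * α)) ≤ S := by
    have : ∀ j ∈ (univ : Finset (Fin m)), Real.exp (-(η * α)) ≤ Real.exp (η * x j) := by
      intro j _
      apply Real.exp_le_exp.2
      have h1 := (hx j).1
      nlinarith
    calc (m : ℝ) * Real.exp (-(η * α)) = ∑ _j : Fin m, Real.exp (-(η * α)) := by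
          simp [mul_comm]
      _ ≤ S := Finset.sum_le_sum this
  -- upper bound on S
  have hShigh : S ≤ c := by
    have hub : ∀ j ∈ (univ : Finset (Fin m)), Real.exp (η * x j) ≤ E := by
      intro j _
      apply Real.exp_le_exp.2
      have h2 := (hx j).2
      nlinarith
    calc S ≤ ∑ _j : Fin m, E := Finset.sum_le_sum hub
      _ = (m : ℝ) * E := by simp [mul_comm]
      _ ≤ c := by rw [hc]; nlinarith
  have hSpos : 0 < S := lt_of_lt_of_le (by positivity) hSlow
  have hMpos : 0 < M := lt_of_lt_of_le hcpos hM₁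
  have hSM : 0 < S + M := by linarith
  -- rewrite the sum
  have hsum : ∑ j, Real.exp (η * x j) * (Real.cosh (η * δ) - 1)
      = S * (Real.cosh (η * δ) - 1) := by
    rw [hS, Finset.sum_mul]
  set T : ℝ := (m : ℝ) * η ^ 2 * δ ^ 2 / (5 * K * Real.exp (2 * η * α)) with hT
  have hTpos : 0 < T := by rw [hT]; positivity
  -- key inequality : T ≤ inner
  have hkey : T ≤ 2 * M / (S + M) ^ 2 * (S * (Real.cosh (η * δ) - 1)) := by
    have hX : (m : ℝ) * Real.exp (-(η * α)) * ((η * δ) ^ 2 / 2)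
        ≤ S * (Real.cosh (η * δ) - 1) := by
      apply mul_le_mul hSlow hCt (by positivity)
      positivity
    have hM1' : c ≤ M := by rw [hc]; exact hM₁
    have hM2' : M ≤ 2 * c := by rw [hc]; linarith [hM₂]
    have hdiv : 4 / (9 * c) ≤ 2 * M / (c + M) ^ 2 := by
      rw [div_le_div_iff₀ (by positivity) (by positivity)]
      nlinarith [mul_nonneg (show (0:ℝ) ≤ 2 * M - c by linarith)
        (show (0:ℝ) ≤ 2 * c - M by linarith)]
    have hdiv2 : 2 * M / (c + M) ^ 2 ≤ 2 * M / (S + M) ^ 2 := by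
      have hsq : (S + M) ^ 2 ≤ (c + M) ^ 2 :=
        pow_le_pow_left₀ hSM.le (by linarith) 2
      exact div_le_div_of_nonneg_left (by linarith) (pow_pos hSM 2) hsq
    have hexp : Real.exp (-(η * α)) = E⁻¹ := by
      rw [hE, ← Real.exp_neg]
    have heq : 4 / (9 * c) * ((m : ℝ) * E⁻¹ * ((η * δ) ^ 2 / 2))
        = 2 * ((m : ℝ) * (η * δ) ^ 2) / (9 * ((K : ℝ) * E ^ 2)) := by
      rw [hc]; field_simp; ring
    calc T ≤ 4 / (9 * c) * ((m : ℝ) * Real.exp (-(η * α)) * ((η * δ) ^ 2 / 2)) := by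
          rw [hT, hE2, hexp, heq,
            div_le_div_iff₀ (by positivity) (by positivity)]
          have hX : 0 ≤ (m : ℝ) * η ^ 2 * δ ^ 2 * ((K : ℝ) * E ^ 2) := by positivity
          nlinarith [hX]
      _ ≤ 2 * M / (S + M) ^ 2 * (S * (Real.cosh (η * δ) - 1)) := by
          apply mul_le_mul (le_trans hdiv hdiv2) hX (by positivity)
          positivity
  -- T ≤ 1
  have hT1 : T ≤ 1 := by
    rw [hT, hE2, div_le_one (by positivity)]
    have h1 : 2 * η * δ ≤ η * α := by nlinarith
    have h2 : (2 * η * δ) ^ 2 / 2 ≤ E := by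
      calc (2 * η * δ) ^ 2 / 2 ≤ Real.cosh (2 * η * δ) - 1 :=
            half_sq_le_cosh_sub_one (by positivity)
        _ ≤ Real.exp (2 * η * δ) - 1 := by
            have h3 : Real.cosh (2 * η * δ) ≤ Real.exp (2 * η * δ) := by
              rw [Real.cosh_eq]
              have h4 : Real.exp (-(2 * η * δ)) ≤ Real.exp (2 * η * δ) :=
                Real.exp_le_exp.2 (by nlinarith)
              linarith
            linarith
        _ ≤ E := by
            have := Real.exp_le_exp.2 h1
            linarith [Real.exp_pos (2 * η * δ)]
    have h2' : 2 * η ^ 2 * δ ^ 2 ≤ E := by nlinarith [h2]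
    have hh1 : (m : ℝ) * η ^ 2 * δ ^ 2 ≤ (K : ℝ) * η ^ 2 * δ ^ 2 := by
      nlinarith [mul_nonneg (sq_nonneg η) (sq_nonneg δ)]
    have hh2 : (K : ℝ) * (2 * η ^ 2 * δ ^ 2) ≤ (K : ℝ) * E := by nlinarith
    have hh3 : (K : ℝ) * E ≤ (K : ℝ) * E ^ 2 := by nlinarith
    nlinarith
  constructor
  · rw [hsum]
    apply Real.log_le_log (by linarith)
    linarith
  · have := log_one_add_ge_half hTpos.le hT1
    rw [ge_iff_le, show (m : ℝ) * η * δ ^ 2 / (10 * K * Real.exp (2 * η * α)) * η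
      = T / 2 by rw [hT]; ring]
    exact this
end
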